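/- Let 0 < κ < a and set σ = √(1 − (κ/a)²) > 0. Then ξ(iκ) = ω(iκ)⁴ if and only if the quantity (ab/π)·σ − (2/π)·arctan(κ/(aσ)) is a nonnegative integer. Moreover, if it equals n − 1 for an integer n, then 1 ≤ n ≤ ⌈ab/π⌉. (The points k = iκ in the upper half-plane with ξ(k) = ω(k)⁴ are the poles of the reflection and transmission coefficients, i.e. the bound states of the block potential.) -/

import Mathlib

open Complex

/-- `ω(k) = k/a + ((k/a)² + 1)^{1/2}` with the principal branch of the square root. -/
noncomputable def omg (a : ℝ) (k : ℂ) : ℂ :=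
  k / (a : ℂ) + ((k / (a : ℂ)) ^ 2 + 1) ^ ((1 : ℂ) / 2)

/-- `ξ(k) = exp(i·a·b·(ω(k) + 1/ω(k)))`. -/
noncomputable def xi (a b : ℝ) (k : ℂ) : ℂ :=
  Complex.exp (Complex.I * (a : ℂ) * (b : ℂ) * (omg a k + 1 / omg a k))

/-- Right reflection coefficient of the block potential `−a²·χ_{[−b,0]}`. -/
noncomputable def Rcoef (a b : ℝ) (k : ℂ) : ℂ :=
  omg a k ^ 2 * (1 - xi a b k) / (xi a b k - omg a k ^ 4)

/-- Left reflection coefficient of the block potential `−a²·χ_{[−b,0]}`. -/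
noncomputable def Lcoef (a b : ℝ) (k : ℂ) : ℂ :=
  Rcoef a b k * Complex.exp (-Complex.I * (a : ℂ) * (b : ℂ) * (omg a k - 1 / omg a k))

/-- Transmission coefficient of the block potential `−a²·χ_{[−b,0]}`. -/
noncomputable def Tcoef (a b : ℝ) (k : ℂ) : ℂ :=
  (1 - omg a k ^ 4) / (xi a b k - omg a k ^ 4) * Complex.exp (Complex.I * (a : ℂ) * (b : ℂ) / omg a k)

/-- The block (well) potential `V = −a²·χ_{[−b,0]}`, complex-valued. -/
noncomputable def Vblock (a b : ℝ) (x : ℝ) : ℂ :=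
  if -b ≤ x ∧ x ≤ 0 then -(a : ℂ) ^ 2 else 0

/-- For `0 < κ < a` and `σ = √(1 − (κ/a)²)`, the pole condition `ξ(iκ) = ω(iκ)⁴`
holds iff `(ab/π)σ − (2/π)·arctan(κ/(aσ))` is a nonnegative integer; moreover if it
equals `n − 1` for an integer `n`, then `1 ≤ n ≤ ⌈ab/π⌉`. -/
theorem block_bound_state_equation (a b : ℝ) (ha : 0 < a) (hb : 0 < b)
    (κ : ℝ) (hκ0 : 0 < κ) (hκa : κ < a)
    (σ : ℝ) (hσ : σ = Real.sqrt (1 - (κ / a) ^ 2)) :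
    0 < σ ∧
    (xi a b (Complex.I * (κ : ℂ)) = omg a (Complex.I * (κ : ℂ)) ^ 4 ↔
      ∃ m : ℕ, a * b / Real.pi * σ - 2 / Real.pi * Real.arctan (κ / (a * σ)) = (m : ℝ)) ∧
    (∀ n : ℤ, a * b / Real.pi * σ - 2 / Real.pi * Real.arctan (κ / (a * σ)) = (n : ℝ) - 1 →
      1 ≤ n ∧ n ≤ ⌈a * b / Real.pi⌉) := by
  have ha0 : (a:ℝ) ≠ 0 := ne_of_gt ha
  have hπ : (0:ℝ) < Real.pi := Real.pi_pos
  set t : ℝ := κ / a with htdef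
  have ht0 : 0 < t := div_pos hκ0 ha
  have ht1 : t < 1 := (div_lt_one ha).mpr hκa
  have h1t : 0 < 1 - t ^ 2 := by nlinarith
  have hσpos : 0 < σ := hσ ▸ Real.sqrt_pos.mpr h1t
  have hσsq : σ ^ 2 = 1 - t ^ 2 := by rw [hσ]; exact Real.sq_sqrt h1t.le
  have hσ1 : σ < 1 := by nlinarith
  set θ := Real.arctan (κ / (a * σ)) with hθdef
  have harg : κ / (a * σ) = t / σ := by rw [htdef]; field_simp
  have hθpos : 0 < θ := by
    rw [hθdef, ← Real.arctan_zero]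
    exact Real.arctan_strictMono (by positivity)
  have hθlt : θ < Real.pi / 2 := Real.arctan_lt_pi_div_two _
  have hsqrt : Real.sqrt (1 + (t / σ) ^ 2) = 1 / σ := by
    have : 1 + (t / σ) ^ 2 = (1 / σ) ^ 2 := by
      field_simp
      nlinarith [hσsq]
    rw [this, Real.sqrt_sq (by positivity)]
  have hcos : Real.cos θ = σ := by
    rw [hθdef, harg, Real.cos_arctan, hsqrt]
    field_simp
  have hsin : Real.sin θ = t := by
    rw [hθdef, harg, Real.sin_arctan, hsqrt]
    field_simp
  -- omega computation
  have homg : omg a (Complex.I * (κ : ℂ)) = Complex.exp ((θ : ℂ) * Complex.I) := by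
    have hk : Complex.I * (κ:ℂ) / (a:ℂ) = (t:ℂ) * Complex.I := by
      rw [htdef]; push_cast; field_simp
    have hsq : ((t:ℂ) * Complex.I) ^ 2 + 1 = ((1 - t ^ 2 : ℝ) : ℂ) := by
      push_cast
      rw [mul_pow, Complex.I_sq]
      ring
    have hcpow : (((1 - t ^ 2 : ℝ) : ℂ)) ^ ((1:ℂ)/2) = (σ : ℂ) := by
      rw [show ((1:ℂ)/2) = (((1:ℝ)/2 : ℝ) : ℂ) by push_cast; ring,
        ← Complex.ofReal_cpow h1t.le]
      rw [hσ]
      norm_num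
      rw [show (1 - (κ/a)^2 : ℝ) = 1 - t^2 from rfl]
      exact (Real.sqrt_eq_rpow _).symm
    rw [omg, hk, hsq, hcpow, Complex.exp_mul_I]
    rw [← Complex.ofReal_cos, ← Complex.ofReal_sin, hcos, hsin]
    ring
  -- xi computation
  have hxi : xi a b (Complex.I * (κ : ℂ)) = Complex.exp (((2*a*b*σ : ℝ) : ℂ) * Complex.I) := by
    rw [xi, homg]
    congr 1
    rw [one_div, ← Complex.exp_neg, show -((θ:ℂ) * Complex.I) = ((-θ : ℝ):ℂ) * Complex.I by
      push_cast; ring, Complex.exp_mul_I, Complex.exp_mul_I]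
    rw [← Complex.ofReal_cos, ← Complex.ofReal_sin, ← Complex.ofReal_cos, ← Complex.ofReal_sin,
      Real.cos_neg, Real.sin_neg, hcos, hsin]
    push_cast
    ring
  have homg4 : omg a (Complex.I * (κ : ℂ)) ^ 4 = Complex.exp (((4*θ : ℝ) : ℂ) * Complex.I) := by
    rw [homg, ← Complex.exp_nat_mul]
    congr 1
    push_cast
    ring
  -- main iff
  refine ⟨hσpos, ?_, ?_⟩
  · rw [hxi, homg4, Complex.exp_eq_exp_iff_exists_int]
    constructor
    · rintro ⟨n, hn⟩
      have hre : 2*a*b*σ = 4*θ + n * (2*Real.pi) := by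
        have h2 := congrArg Complex.im hn
        simpa using h2
      have hX : a * b / Real.pi * σ - 2 / Real.pi * θ = (n : ℝ) := by
        field_simp
        linarith
      have hlt : (-1 : ℝ) < (n : ℝ) := by
        rw [← hX]
        have h1 : 0 < a * b / Real.pi * σ := by positivity
        have h2 : 2 / Real.pi * θ < 1 := by
          rw [div_mul_eq_mul_div, div_lt_one hπ]
          linarith
        linarith
      have hn0 : 0 ≤ n := by
        have : (-1 : ℤ) < n := by exact_mod_cast hlt
        omega
      refine ⟨n.toNat, ?_⟩
      rw [hX]
      exact_mod_cast (Int.toNat_of_nonneg hn0).symm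
    · rintro ⟨m, hm⟩
      refine ⟨(m : ℤ), ?_⟩
      have hre : 2*a*b*σ = 4*θ + (m:ℝ) * (2*Real.pi) := by
        field_simp at hm
        linarith
      have hc : ((2*a*b*σ : ℝ):ℂ) = ((4*θ + (m:ℝ)*(2*Real.pi) : ℝ):ℂ) := by
        exact_mod_cast congrArg Complex.ofReal hre
      rw [hc]
      push_cast
      ring
  · intro n hn
    have hX : a * b / Real.pi * σ - 2 / Real.pi * θ = (n:ℝ) - 1 := hn
    have hlow : (0:ℝ) < (n:ℝ) := by
      have h1 : 0 < a * b / Real.pi * σ := by positivity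
      have h2 : 2 / Real.pi * θ < 1 := by
        rw [div_mul_eq_mul_div, div_lt_one hπ]
        linarith
      linarith
    have hn1 : 1 ≤ n := by
      have : (0:ℤ) < n := by exact_mod_cast hlow
      omega
    refine ⟨hn1, ?_⟩
    have hupper : (n:ℝ) - 1 < a * b / Real.pi := by
      rw [← hX]
      have h1 : a * b / Real.pi * σ < a * b / Real.pi := by
        have : 0 < a * b / Real.pi := by positivity
        nlinarith
      have h2 : 0 < 2 / Real.pi * θ := by positivity
      linarith
    have hceil : a * b / Real.pi ≤ (⌈a * b / Real.pi⌉ : ℝ) := Int.le_ceil _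
    have : (n:ℝ) < (⌈a * b / Real.pi⌉ : ℝ) + 1 := by linarith
    have h3 : n < ⌈a * b / Real.pi⌉ + 1 := by exact_mod_cast this
    omega
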